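/- Every saturated ω-well-filtered T0 space is ω-well-filtered, and conversely every ω-well-filtered T0 space is saturated ω-well-filtered; i.e., the two notions coincide. -/

import Mathlib

open Set

def RelCpt {X : Type*} [TopologicalSpace X] (A B : Set X) : Prop :=
  A ⊆ B ∧ ∀ 𝒰 : Set (Set X), (∀ U ∈ 𝒰, IsOpen U) → B ⊆ ⋃₀ 𝒰 →
    ∃ 𝒱 ⊆ 𝒰, 𝒱.Finite ∧ A ⊆ ⋃₀ 𝒱

def Saturated {X : Type*} [TopologicalSpace X] (A : Set X) : Prop :=
  A = ⋂₀ {U : Set X | IsOpen U ∧ A ⊆ U}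

def WellFiltered (X : Type*) [TopologicalSpace X] : Prop :=
  ∀ 𝒦 : Set (Set X), 𝒦.Nonempty →
    (∀ K ∈ 𝒦, IsCompact K ∧ Saturated K) →
    (∀ K₁ ∈ 𝒦, ∀ K₂ ∈ 𝒦, ∃ K₃ ∈ 𝒦, K₃ ⊆ K₁ ∧ K₃ ⊆ K₂) →
    ∀ U : Set X, IsOpen U → ⋂₀ 𝒦 ⊆ U → ∃ K ∈ 𝒦, K ⊆ U

def OmegaWellFiltered (X : Type*) [TopologicalSpace X] : Prop :=
  ∀ K : ℕ → Set X, (∀ n, IsCompact (K n) ∧ Saturated (K n)) →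
    (∀ m n : ℕ, ∃ k, K k ⊆ K m ∧ K k ⊆ K n) →
    ∀ U : Set X, IsOpen U → (⋂ n, K n) ⊆ U → ∃ n, K n ⊆ U

def SatWellFiltered (X : Type*) [TopologicalSpace X] : Prop :=
  ∀ 𝒜 : Set (Set X), 𝒜.Nonempty →
    (∀ A ∈ 𝒜, Saturated A) →
    (∀ A₁ ∈ 𝒜, ∀ A₂ ∈ 𝒜, ∃ A₃ ∈ 𝒜, RelCpt A₃ A₁ ∧ RelCpt A₃ A₂) →
    ∀ U : Set X, IsOpen U → ⋂₀ 𝒜 ⊆ U → ∃ A ∈ 𝒜, A ⊆ U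

def SatOmegaWellFiltered (X : Type*) [TopologicalSpace X] : Prop :=
  ∀ A : ℕ → Set X, (∀ n, Saturated (A n)) →
    (∀ m n : ℕ, ∃ k, RelCpt (A k) (A m) ∧ RelCpt (A k) (A n)) →
    ∀ U : Set X, IsOpen U → (⋂ n, A n) ⊆ U → ∃ n, A n ⊆ U

def OpenWellFiltered (X : Type*) [TopologicalSpace X] : Prop :=
  ∀ 𝒜 : Set (Set X), 𝒜.Nonempty →
    (∀ A ∈ 𝒜, IsOpen A) →
    (∀ A₁ ∈ 𝒜, ∀ A₂ ∈ 𝒜, ∃ A₃ ∈ 𝒜, RelCpt A₃ A₁ ∧ RelCpt A₃ A₂) →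
    ∀ U : Set X, IsOpen U → ⋂₀ 𝒜 ⊆ U → ∃ A ∈ 𝒜, A ⊆ U

def OpenOmegaWellFiltered (X : Type*) [TopologicalSpace X] : Prop :=
  ∀ A : ℕ → Set X, (∀ n, IsOpen (A n)) →
    (∀ m n : ℕ, ∃ k, RelCpt (A k) (A m) ∧ RelCpt (A k) (A n)) →
    ∀ U : Set X, IsOpen U → (⋂ n, A n) ⊆ U → ∃ n, A n ⊆ U

def CoreCompact (X : Type*) [TopologicalSpace X] : Prop :=
  ∀ (x : X) (U : Set X), IsOpen U → x ∈ U → ∃ V : Set X, IsOpen V ∧ x ∈ V ∧ RelCpt V U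

def Sober (X : Type*) [TopologicalSpace X] : Prop :=
  ∀ F : Set X, IsClosed F → F.Nonempty →
    (∀ F₁ F₂ : Set X, IsClosed F₁ → IsClosed F₂ → F ⊆ F₁ ∪ F₂ → F ⊆ F₁ ∨ F ⊆ F₂) →
    ∃! x : X, F = closure {x}

lemma relCpt_of_isCompact {X : Type*} [TopologicalSpace X] {A B : Set X}
    (hA : IsCompact A) (hAB : A ⊆ B) : RelCpt A B := by
  refine ⟨hAB, fun 𝒰 hopen hcov => ?_⟩
  have hcov' : A ⊆ ⋃ V : 𝒰, (V : Set X) := by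
    rw [← sUnion_eq_iUnion]; exact hAB.trans hcov
  obtain ⟨t, ht⟩ := hA.elim_finite_subcover (fun V : 𝒰 => (V : Set X))
    (fun V => hopen V V.2) hcov'
  refine ⟨(fun V : 𝒰 => (V : Set X)) '' ↑t, ?_, t.finite_toSet.image _, ?_⟩
  · rintro _ ⟨V, _, rfl⟩; exact V.2
  · rw [sUnion_image]
    simpa using ht

/-- The saturated ω-well-filtered spaces are exactly the ω-well-filtered spaces. -/
theorem stmt6 (X : Type*) [TopologicalSpace X] [T0Space X] :
    SatOmegaWellFiltered X ↔ OmegaWellFiltered X := by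
  constructor
  · -- easy direction
    intro hsat K hK hfil U hU hsub
    refine hsat K (fun n => (hK n).2) (fun m n => ?_) U hU hsub
    obtain ⟨k, h1, h2⟩ := hfil m n
    exact ⟨k, relCpt_of_isCompact (hK k).1 h1, relCpt_of_isCompact (hK k).1 h2⟩
  · -- hard direction
    intro hwf A hsatA hfilA U hU hsub
    by_contra hcon
    push_neg at hcon
    -- build a ≪-descending chain B
    choose f hf1 hf2 using hfilA
    let φ : ℕ → ℕ := fun n => Nat.rec 0 (fun m ih => f ih (m + 1)) n
    set B : ℕ → Set X := fun n => A (φ n) with hBdef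
    have hBrel : ∀ n, RelCpt (B (n + 1)) (B n) := fun n => hf1 (φ n) (n + 1)
    have hBA : ∀ n, B (n + 1) ⊆ A (n + 1) := fun n => (hf2 (φ n) (n + 1)).1
    have hBstep : ∀ n, B (n + 1) ⊆ B n := fun n => (hBrel n).1
    have hBmono : ∀ m n, m ≤ n → B n ⊆ B m := by
      intro m n h
      induction n, h using Nat.le_induction with
      | base => exact subset_rfl
      | succ n hmn ih => exact (hBstep n).trans ih
    have hBU : ∀ n, ¬ B n ⊆ U := fun n => hcon (φ n)
    have hBsat : ∀ n, Saturated (B n) := fun n => hsatA (φ n)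
    have hBiA : (⋂ n, B n) ⊆ ⋂ n, A n := by
      intro x hx
      rw [mem_iInter] at hx ⊢
      intro n
      cases n with
      | zero => exact hx 0
      | succ n => exact hBA n (hx (n + 1))
    have hBiU : (⋂ n, B n) ⊆ U := hBiA.trans hsub
    -- Zorn: a maximal open set U* ⊇ U containing no B n
    set S : Set (Set X) := {V | IsOpen V ∧ U ⊆ V ∧ ∀ n, ¬ B n ⊆ V} with hSdef
    have hUS : U ∈ S := ⟨hU, subset_rfl, hBU⟩
    have hZ : ∃ m, U ⊆ m ∧ Maximal (· ∈ S) m := by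
      refine zorn_subset_nonempty S ?_ U hUS
      intro c hcS hchain hcne
      refine ⟨⋃₀ c, ⟨isOpen_sUnion (fun V hV => (hcS hV).1), ?_, ?_⟩,
        fun s hs => subset_sUnion_of_mem hs⟩
      · obtain ⟨V, hV⟩ := hcne
        exact (hcS hV).2.1.trans (subset_sUnion_of_mem hV)
      · intro n hn
        obtain ⟨𝒱, h𝒱c, h𝒱fin, h𝒱cov⟩ :=
          (hBrel n).2 c (fun V hV => (hcS hV).1) hn
        rcases 𝒱.eq_empty_or_nonempty with rfl | h𝒱ne
        · rw [sUnion_empty] at h𝒱cov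
          exact hBU (n + 1) (h𝒱cov.trans (empty_subset U))
        · obtain ⟨M, hM𝒱, hMmax⟩ : ∃ M ∈ 𝒱, ∀ V ∈ 𝒱, M ⊆ V → M = V := by
            obtain ⟨M, hM⟩ := Set.Finite.exists_maximal (s := 𝒱) h𝒱fin h𝒱ne
            exact ⟨M, hM.prop, fun V hV h => le_antisymm h (hM.2 hV h)⟩
          have hMc : M ∈ c := h𝒱c hM𝒱
          have hsub𝒱 : ⋃₀ 𝒱 ⊆ M := by
            rintro x ⟨V, hV𝒱, hxV⟩
            rcases eq_or_ne V M with rfl | hne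
            · exact hxV
            · rcases hchain (h𝒱c hV𝒱) hMc hne with h | h
              · exact h hxV
              · have h' : M = V := hMmax V hV𝒱 h
                exact h' ▸ hxV
          exact (hcS hMc).2.2 (n + 1) (h𝒱cov.trans hsub𝒱)
    obtain ⟨W, hUW, hWS, hWmax⟩ : ∃ m, U ⊆ m ∧ m ∈ S ∧ ∀ V ∈ S, m ⊆ V → V ⊆ m := by
      obtain ⟨m, hm1, hm2⟩ := hZ
      exact ⟨m, hm1, hm2.prop, fun V hV hmV => hm2.le_of_ge hV hmV⟩
    have hWopen : IsOpen W := hWS.1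
    have hWB : ∀ n, ¬ B n ⊆ W := hWS.2.2
    -- key property from maximality
    have hkey : ∀ V : Set X, IsOpen V → ¬ V ⊆ W → ∃ ρ, B ρ \ W ⊆ V := by
      intro V hVopen hVW
      by_contra h
      push_neg at h
      have hWV : W ∪ V ∈ S := by
        refine ⟨hWopen.union hVopen, hUW.trans subset_union_left, fun n hn => ?_⟩
        exact h n (fun x hx => (hn hx.1).resolve_left hx.2)
      have := hWmax _ hWV subset_union_left
      exact hVW (subset_union_right.trans this)
    -- pick points
    have hgex : ∀ n, ∃ x, x ∈ B n \ W := fun n => not_subset.1 (hWB n)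
    choose g hg using hgex
    -- the compact saturated sets
    set K : ℕ → Set X := fun n => ⋂₀ {V : Set X | IsOpen V ∧ ∀ m, n ≤ m → g m ∈ V}
      with hKdef
    have hgK : ∀ n m, n ≤ m → g m ∈ K n :=
      fun n m h => mem_sInter.2 fun V hV => hV.2 m h
    have hKB : ∀ n, K n ⊆ B n := by
      intro n x hx
      rw [hBsat n]
      intro V hV
      exact hx V ⟨hV.1, fun m hm => hV.2 (hBmono n m hm (hg m).1)⟩
    have hKanti : ∀ m n, m ≤ n → K n ⊆ K m := by
      intro m n h x hx
      intro V hV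
      exact hx V ⟨hV.1, fun k hk => hV.2 k (h.trans hk)⟩
    have hKsat : ∀ n, Saturated (K n) := by
      intro n
      apply Subset.antisymm
      · intro x hx V hV
        exact hV.2 hx
      · intro x hx V hV
        exact hx V ⟨hV.1, sInter_subset_of_mem hV⟩
    have hKcpt : ∀ n, IsCompact (K n) := by
      intro n
      apply isCompact_of_finite_subcover
      intro ι Wc hWcopen hcov
      classical
      obtain ⟨i₀, hi₀⟩ := mem_iUnion.1 (hcov (hgK n n le_rfl))
      have hnW : ¬ Wc i₀ ⊆ W := fun h => (hg n).2 (h hi₀)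
      obtain ⟨ρ, hρ⟩ := hkey (Wc i₀) (hWcopen i₀) hnW
      have hgm : ∀ m, ∃ i, g (max m n) ∈ Wc i :=
        fun m => mem_iUnion.1 (hcov (hgK n _ (le_max_right m n)))
      choose σ hσ using hgm
      refine ⟨insert i₀ ((Finset.range (ρ + 1)).image σ), ?_⟩
      set Wt : Set X := ⋃ i ∈ (insert i₀ ((Finset.range (ρ + 1)).image σ) : Finset ι), Wc i
        with hWtdef
      have hWtopen : IsOpen Wt := isOpen_biUnion fun i _ => hWcopen i
      have hgWt : ∀ m, n ≤ m → g m ∈ Wt := by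
        intro m hm
        by_cases hmρ : ρ ≤ m
        · have : g m ∈ B ρ \ W := ⟨hBmono ρ m hmρ (hg m).1, (hg m).2⟩
          exact mem_biUnion (Finset.mem_insert_self _ _) (hρ this)
        · have hmax : max m n = m := max_eq_left hm
          have : g m ∈ Wc (σ m) := by have h' := hσ m; rwa [hmax] at h'
          refine mem_biUnion (Finset.mem_insert_of_mem ?_) this
          exact Finset.mem_image_of_mem σ (Finset.mem_range.2 (by omega))
      exact fun x hx => hx Wt ⟨hWtopen, hgWt⟩
    -- apply ω-well-filteredness
    have hKiW : (⋂ n, K n) ⊆ W := by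
      refine (iInter_mono (fun n => hKB n)).trans (hBiU.trans hUW)
    obtain ⟨n, hn⟩ := hwf K (fun n => ⟨hKcpt n, hKsat n⟩)
      (fun m n => ⟨max m n, hKanti m _ (le_max_left m n), hKanti n _ (le_max_right m n)⟩)
      W hWopen hKiW
    exact (hg n).2 (hn (hgK n n le_rfl))
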